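/- Let T(h) = h_xx + h_yy + x·h_yz − y·h_xz + ((x²+y²)/4)·h_zz and U(h) = h_zz be operators on polynomials in ℝ[x,y,z]. Then for every polynomial h, there exists r ∈ ℕ such that every composition of r operators from {T, U} applied to h is zero. -/

import Mathlib

/-- Partial derivative in `x` for functions of `(x,y,z)`. -/
noncomputable def qdX (f : ℝ → ℝ → ℝ → ℝ) : ℝ → ℝ → ℝ → ℝ :=
  fun x y z => deriv (fun s => f s y z) x

/-- Partial derivative in `y`. -/
noncomputable def qdY (f : ℝ → ℝ → ℝ → ℝ) : ℝ → ℝ → ℝ → ℝ :=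
  fun x y z => deriv (fun s => f x s z) y

/-- Partial derivative in `z`. -/
noncomputable def qdZ (f : ℝ → ℝ → ℝ → ℝ) : ℝ → ℝ → ℝ → ℝ :=
  fun x y z => deriv (fun s => f x y s) z

/-- `T(h) = h_xx + h_yy + x·h_yz − y·h_xz + ((x²+y²)/4)·h_zz`. -/
noncomputable def opT (f : ℝ → ℝ → ℝ → ℝ) : ℝ → ℝ → ℝ → ℝ := fun x y z =>
  qdX (qdX f) x y z + qdY (qdY f) x y z + x * qdY (qdZ f) x y z - y * qdX (qdZ f) x y z
    + (x ^ 2 + y ^ 2) / 4 * qdZ (qdZ f) x y z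

/-- `U(h) = h_zz`. -/
noncomputable def opU (f : ℝ → ℝ → ℝ → ℝ) : ℝ → ℝ → ℝ → ℝ := fun x y z =>
  qdZ (qdZ f) x y z

open MvPolynomial

noncomputable def EP (P : MvPolynomial (Fin 3) ℝ) : ℝ → ℝ → ℝ → ℝ :=
  fun x y z => eval (![x, y, z] : Fin 3 → ℝ) P

lemma upd0 (x y z s : ℝ) : Function.update (![x,y,z] : Fin 3 → ℝ) 0 s = ![s,y,z] := by
  funext j; fin_cases j <;> simp [Function.update]
lemma upd1 (x y z s : ℝ) : Function.update (![x,y,z] : Fin 3 → ℝ) 1 s = ![x,s,z] := by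
  funext j; fin_cases j <;> simp [Function.update]
lemma upd2 (x y z s : ℝ) : Function.update (![x,y,z] : Fin 3 → ℝ) 2 s = ![x,y,s] := by
  funext j; fin_cases j <;> simp [Function.update]

lemma hasDerivAt_evalP (P : MvPolynomial (Fin 3) ℝ) (i : Fin 3) (v : Fin 3 → ℝ) (t : ℝ) :
    HasDerivAt (fun s => eval (Function.update v i s) P)
      (eval (Function.update v i t) (pderiv i P)) t := by
  induction P using MvPolynomial.induction_on with
  | C a => simpa [pderiv_C] using hasDerivAt_const t a
  | add p q hp hq => simpa [map_add, Pi.add_def] using hp.add hq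
  | mul_X p j hp =>
    by_cases hj : j = i
    · subst hj
      have hfun : (fun s => eval (Function.update v j s) (p * X j))
          = fun s => eval (Function.update v j s) p * s := by
        funext s; simp [Function.update_self]
      rw [hfun]
      have := hp.mul (hasDerivAt_id t)
      have hval : eval (Function.update v j t) (pderiv j (p * X j))
          = eval (Function.update v j t) (pderiv j p) * t + eval (Function.update v j t) p := by
        simp [pderiv_mul, Function.update_self]; ring
      rw [hval]
      simpa [Pi.mul_def] using this
    · have hfun : (fun s => eval (Function.update v i s) (p * X j))
          = fun s => eval (Function.update v i s) p * v j := by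
        funext s; simp [Function.update_of_ne hj]
      rw [hfun]
      have hval : eval (Function.update v i t) (pderiv i (p * X j))
          = eval (Function.update v i t) (pderiv i p) * v j := by
        simp [pderiv_mul, pderiv_X_of_ne hj, Function.update_of_ne hj]; ring
      rw [hval]
      exact hp.mul_const (v j)

lemma qdX_EP (P : MvPolynomial (Fin 3) ℝ) : qdX (EP P) = EP (pderiv 0 P) := by
  funext x y z
  have h := hasDerivAt_evalP P 0 ![x,y,z] x
  have hx : (![x,y,z] : Fin 3 → ℝ) 0 = x := rfl
  rw [show Function.update (![x,y,z] : Fin 3 → ℝ) 0 x = ![x,y,z] by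
    rw [← hx]; exact Function.update_eq_self _ _] at h
  have hfun : (fun s : ℝ => eval (![s,y,z] : Fin 3 → ℝ) P) = fun s => eval (Function.update (![x,y,z] : Fin 3 → ℝ) 0 s) P := by
    funext s; rw [upd0]
  simp only [qdX, EP]
  rw [hfun]
  exact h.deriv

lemma qdY_EP (P : MvPolynomial (Fin 3) ℝ) : qdY (EP P) = EP (pderiv 1 P) := by
  funext x y z
  have h := hasDerivAt_evalP P 1 ![x,y,z] y
  have hx : (![x,y,z] : Fin 3 → ℝ) 1 = y := rfl
  rw [show Function.update (![x,y,z] : Fin 3 → ℝ) 1 y = ![x,y,z] by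
    rw [← hx]; exact Function.update_eq_self _ _] at h
  have hfun : (fun s : ℝ => eval (![x,s,z] : Fin 3 → ℝ) P) = fun s => eval (Function.update (![x,y,z] : Fin 3 → ℝ) 1 s) P := by
    funext s; rw [upd1]
  simp only [qdY, EP]
  rw [hfun]
  exact h.deriv

lemma qdZ_EP (P : MvPolynomial (Fin 3) ℝ) : qdZ (EP P) = EP (pderiv 2 P) := by
  funext x y z
  have h := hasDerivAt_evalP P 2 ![x,y,z] z
  have hx : (![x,y,z] : Fin 3 → ℝ) 2 = z := rfl
  rw [show Function.update (![x,y,z] : Fin 3 → ℝ) 2 z = ![x,y,z] by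
    rw [← hx]; exact Function.update_eq_self _ _] at h
  have hfun : (fun s : ℝ => eval (![x,y,s] : Fin 3 → ℝ) P) = fun s => eval (Function.update (![x,y,z] : Fin 3 → ℝ) 2 s) P := by
    funext s; rw [upd2]
  simp only [qdZ, EP]
  rw [hfun]
  exact h.deriv

noncomputable def TP (P : MvPolynomial (Fin 3) ℝ) : MvPolynomial (Fin 3) ℝ :=
  pderiv 0 (pderiv 0 P) + pderiv 1 (pderiv 1 P) + X 0 * pderiv 1 (pderiv 2 P)
    - X 1 * pderiv 0 (pderiv 2 P) + C (4⁻¹ : ℝ) * (X 0 ^ 2 + X 1 ^ 2) * pderiv 2 (pderiv 2 P)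

noncomputable def UP (P : MvPolynomial (Fin 3) ℝ) : MvPolynomial (Fin 3) ℝ :=
  pderiv 2 (pderiv 2 P)

lemma opT_EP (P : MvPolynomial (Fin 3) ℝ) : opT (EP P) = EP (TP P) := by
  funext x y z
  simp only [opT, qdX_EP, qdY_EP, qdZ_EP, TP, EP, map_add, map_sub, map_mul, map_pow,
    eval_C, eval_X, Matrix.cons_val_zero, Matrix.cons_val_one, Matrix.head_cons]
  ring

lemma opU_EP (P : MvPolynomial (Fin 3) ℝ) : opU (EP P) = EP (UP P) := by
  funext x y z
  simp only [opU, qdZ_EP, UP]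

/-- weight of a monomial: `x`, `y` weigh 1 and `z` weighs 2. -/
def wt (m : Fin 3 →₀ ℕ) : ℕ := m 0 + m 1 + 2 * m 2

lemma wt_add (a b : Fin 3 →₀ ℕ) : wt (a + b) = wt a + wt b := by
  simp [wt, Finsupp.add_apply]; ring

lemma coeff_pderiv (i : Fin 3) (P : MvPolynomial (Fin 3) ℝ) (m : Fin 3 →₀ ℕ) :
    coeff m (pderiv i P) = (m i + 1) * coeff (m + Finsupp.single i 1) P := by
  induction P using MvPolynomial.induction_on' with
  | monomial s a =>
    rw [pderiv_monomial]
    by_cases h : s = m + Finsupp.single i 1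
    · subst h
      have h1 : m + Finsupp.single i 1 - Finsupp.single i 1 = m := by
        ext j; simp [Finsupp.tsub_apply, Finsupp.add_apply]
      have h2 : (m + Finsupp.single i 1 : Fin 3 →₀ ℕ) i = m i + 1 := by
        rw [Finsupp.add_apply, Finsupp.single_eq_same]
      rw [MvPolynomial.coeff_monomial, MvPolynomial.coeff_monomial, if_pos h1, if_pos rfl, h2]
      push_cast
      ring
    · rw [coeff_monomial, coeff_monomial, if_neg h, mul_zero]
      by_cases hsub : s - Finsupp.single i 1 = m
      · rw [if_pos hsub]
        by_cases hsi : s i = 0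
        · simp [hsi]
        · exfalso
          apply h
          ext j
          have hj := DFunLike.congr_fun hsub j
          rw [Finsupp.tsub_apply] at hj
          rw [Finsupp.add_apply]
          rcases eq_or_ne i j with rfl | hij
          · rw [Finsupp.single_eq_same] at hj ⊢
            omega
          · rw [Finsupp.single_eq_of_ne' hij] at hj ⊢
            omega
      · rw [if_neg hsub]
  | add p q hp hq =>
    simp only [map_add, coeff_add, hp, hq]; ring

lemma supp_pderiv {i : Fin 3} {P : MvPolynomial (Fin 3) ℝ} {m : Fin 3 →₀ ℕ}
    (h : m ∈ (pderiv i P).support) : m + Finsupp.single i 1 ∈ P.support := by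
  rw [MvPolynomial.mem_support_iff] at h ⊢
  intro hc
  apply h
  rw [coeff_pderiv, hc, mul_zero]

lemma wt_single0 : wt (Finsupp.single (0 : Fin 3) 1) = 1 := by
  simp [wt, Finsupp.single_apply]
lemma wt_single1 : wt (Finsupp.single (1 : Fin 3) 1) = 1 := by
  simp [wt, Finsupp.single_apply]
lemma wt_single2 : wt (Finsupp.single (2 : Fin 3) 1) = 2 := by
  simp [wt, Finsupp.single_apply]

/-- Weighted degree bound predicate. -/
def WB (n : ℕ) (P : MvPolynomial (Fin 3) ℝ) : Prop := ∀ m ∈ P.support, wt m ≤ n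

lemma wb_T {n : ℕ} {P : MvPolynomial (Fin 3) ℝ} (h : WB n P) :
    ∀ m ∈ (TP P).support, wt m + 2 ≤ n := by
  intro m hm
  unfold TP at hm
  have hm1 := MvPolynomial.support_add hm
  rw [Finset.mem_union] at hm1
  rcases hm1 with hm1 | hm5
  · rw [sub_eq_add_neg] at hm1
    have hm2 := MvPolynomial.support_add hm1
    rw [Finset.mem_union] at hm2
    rcases hm2 with hm2 | hm4
    · have hm3 := MvPolynomial.support_add hm2
      rw [Finset.mem_union] at hm3
      rcases hm3 with hm3 | hm3
      · have hm6 := MvPolynomial.support_add hm3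
        rw [Finset.mem_union] at hm6
        rcases hm6 with h6 | h6
        · -- pderiv 0 (pderiv 0 P)
          have := h _ (supp_pderiv (supp_pderiv h6))
          rw [wt_add, wt_add] at this
          rw [wt_single0] at this
          omega
        · have := h _ (supp_pderiv (supp_pderiv h6))
          rw [wt_add, wt_add, wt_single1] at this
          omega
      · -- X 0 * pderiv 1 (pderiv 2 P)
        have hsub := MvPolynomial.support_mul _ _ hm3
        rw [Finset.mem_add] at hsub
        obtain ⟨a, ha, b, hb, hab⟩ := hsub
        rw [MvPolynomial.support_X] at ha
        rw [Finset.mem_singleton] at ha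
        have := h _ (supp_pderiv (supp_pderiv hb))
        rw [wt_add, wt_add, wt_single1, wt_single2] at this
        subst hab ha
        rw [wt_add, wt_single0]
        omega
    · -- - X 1 * pderiv 0 (pderiv 2 P)
      rw [MvPolynomial.support_neg] at hm4
      have hsub := MvPolynomial.support_mul _ _ hm4
      rw [Finset.mem_add] at hsub
      obtain ⟨a, ha, b, hb, hab⟩ := hsub
      rw [MvPolynomial.support_X] at ha
      rw [Finset.mem_singleton] at ha
      have := h _ (supp_pderiv (supp_pderiv hb))
      rw [wt_add, wt_add, wt_single0, wt_single2] at this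
      subst hab ha
      rw [wt_add, wt_single1]
      omega
  · -- C 4⁻¹ * (X 0 ^ 2 + X 1 ^ 2) * pderiv 2 (pderiv 2 P)
    have hsub := MvPolynomial.support_mul _ _ hm5
    rw [Finset.mem_add] at hsub
    obtain ⟨a, ha, b, hb, hab⟩ := hsub
    have hwb : wt b + 4 ≤ n := by
      have := h _ (supp_pderiv (supp_pderiv hb))
      rw [wt_add, wt_add, wt_single2] at this
      omega
    have hwa : wt a ≤ 2 := by
      have ha' : a ∈ ((X 0 ^ 2 + X 1 ^ 2 : MvPolynomial (Fin 3) ℝ)).support := by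
        have : coeff a (C (4⁻¹ : ℝ) * (X 0 ^ 2 + X 1 ^ 2)) ≠ 0 :=
          MvPolynomial.mem_support_iff.mp ha
        rw [MvPolynomial.coeff_C_mul] at this
        rw [MvPolynomial.mem_support_iff]
        intro hc; exact this (by rw [hc, mul_zero])
      have ha2 := MvPolynomial.support_add ha'
      rw [Finset.mem_union] at ha2
      rcases ha2 with ha2 | ha2
      · rw [MvPolynomial.X_pow_eq_monomial] at ha2
        have := MvPolynomial.support_monomial_subset ha2
        rw [Finset.mem_singleton] at this
        subst this
        simp [wt, Finsupp.single_apply]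
      · rw [MvPolynomial.X_pow_eq_monomial] at ha2
        have := MvPolynomial.support_monomial_subset ha2
        rw [Finset.mem_singleton] at this
        subst this
        simp [wt, Finsupp.single_apply]
    subst hab
    rw [wt_add]
    omega

lemma wb_U {n : ℕ} {P : MvPolynomial (Fin 3) ℝ} (h : WB n P) :
    ∀ m ∈ (UP P).support, wt m + 4 ≤ n := by
  intro m hm
  have := h _ (supp_pderiv (supp_pderiv hm))
  rw [wt_add, wt_add, wt_single2] at this
  omega

lemma key : ∀ n : ℕ, ∀ Q : MvPolynomial (Fin 3) ℝ, WB n Q →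
    ∀ ops : List ((ℝ → ℝ → ℝ → ℝ) → (ℝ → ℝ → ℝ → ℝ)),
      (∀ o ∈ ops, o = opT ∨ o = opU) → ops.length = n + 1 →
      ∀ x y z : ℝ, (ops.foldr (fun o g => o g) (EP Q)) x y z = 0 := by
  intro n
  induction n with
  | zero =>
    intro Q hQ ops hops hlen x y z
    match ops, hlen with
    | [o], _ =>
      have ho := hops o (List.mem_singleton_self o)
      have : o (EP Q) = EP 0 := by
        rcases ho with ho | ho <;> subst ho
        · rw [opT_EP]
          have h0 : TP Q = 0 := by
            rw [← MvPolynomial.support_eq_empty, Finset.eq_empty_iff_forall_notMem]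
            intro m hm
            have := wb_T hQ m hm
            omega
          rw [h0]
        · rw [opU_EP]
          have h0 : UP Q = 0 := by
            rw [← MvPolynomial.support_eq_empty, Finset.eq_empty_iff_forall_notMem]
            intro m hm
            have := wb_U hQ m hm
            omega
          rw [h0]
      simp only [List.foldr_cons, List.foldr_nil, this, EP, map_zero]
  | succ n ih =>
    intro Q hQ ops hops hlen x y z
    rcases List.eq_nil_or_concat ops with rfl | ⟨L, o, rfl⟩
    · simp at hlen
    · rw [List.concat_eq_append] at hops hlen ⊢
      have hLlen : L.length = n + 1 := by
        simp [List.length_append] at hlen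
        omega
      have ho : o = opT ∨ o = opU := hops o (by simp)
      have hLops : ∀ o' ∈ L, o' = opT ∨ o' = opU := fun o' h' => hops o' (by simp [h'])
      rw [List.foldr_append]
      simp only [List.foldr_cons, List.foldr_nil]
      rcases ho with ho | ho <;> subst ho
      · rw [opT_EP]
        exact ih (TP Q) (fun m hm => by have := wb_T hQ m hm; omega) L hLops hLlen x y z
      · rw [opU_EP]
        exact ih (UP Q) (fun m hm => by have := wb_U hQ m hm; omega) L hLops hLlen x y z

/-- for every polynomial `h ∈ ℝ[x,y,z]` there is an `r` such that every
composition of `r` operators from `{T, U}` applied to `h` vanishes identically. -/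
theorem stmt_12 (P : MvPolynomial (Fin 3) ℝ) :
    ∃ r : ℕ, ∀ ops : List ((ℝ → ℝ → ℝ → ℝ) → (ℝ → ℝ → ℝ → ℝ)),
      (∀ o ∈ ops, o = opT ∨ o = opU) → ops.length = r →
      ∀ x y z : ℝ,
        (ops.foldr (fun o g => o g)
            (fun x y z => MvPolynomial.eval (![x, y, z] : Fin 3 → ℝ) P)) x y z = 0 := by
  refine ⟨P.support.sup wt + 1, ?_⟩
  intro ops hops hlen x y z
  exact key (P.support.sup wt) P (fun m hm => Finset.le_sup hm) ops hops hlen x y z
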